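/- For $a \in (0,\pi/2)$, the boundary values of $X(\xi,a) = \mathrm{Re}\,\ln\left(\sin z + \sqrt{\sin^2 z - \sin^2 a}\right) - \xi_2$ satisfy: $X(\xi_1,0,a) = \ln\sin a$ for $|\xi_1 - \pi j| < a$ ($j \in \mathbb{Z}$), and $\partial X/\partial\xi_2(\xi_1,0,a) = -1$ for $\xi_1$ with $|\xi_1 - \pi j| > a$ for all $j \in \mathbb{Z}$. -/

import Mathlib

open MeasureTheory Real Set

noncomputable def pd1 (f : ℝ × ℝ → ℝ) (p : ℝ × ℝ) : ℝ :=
  deriv (fun t => f (t, p.2)) p.1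

noncomputable def pd2 (f : ℝ × ℝ → ℝ) (p : ℝ × ℝ) : ℝ :=
  deriv (fun t => f (p.1, t)) p.2

/-- `X(ξ,a) = Re log(sin z + (sin² z − sin² a)^{1/2}) − ξ₂`, `z = ξ₁ + i ξ₂`. -/
noncomputable def Xfun (a : ℝ) (ξ : ℝ × ℝ) : ℝ :=
  (Complex.log (Complex.sin ((ξ.1 : ℂ) + (ξ.2 : ℂ) * Complex.I) +
      (Complex.sin ((ξ.1 : ℂ) + (ξ.2 : ℂ) * Complex.I) ^ 2 - Complex.sin (a : ℂ) ^ 2)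
        ^ ((1 : ℂ)/2))).re - ξ.2

/-- `Y(ξ,a) = Im log(sin z + (sin² z − sin² a)^{1/2}) − π/2 + ξ₁`. -/
noncomputable def Yfun (a : ℝ) (ξ : ℝ × ℝ) : ℝ :=
  (Complex.log (Complex.sin ((ξ.1 : ℂ) + (ξ.2 : ℂ) * Complex.I) +
      (Complex.sin ((ξ.1 : ℂ) + (ξ.2 : ℂ) * Complex.I) ^ 2 - Complex.sin (a : ℂ) ^ 2)
        ^ ((1 : ℂ)/2))).im - π/2 + ξ.1

/-- The half-period strip `Π = (−π/2, π/2) × (0, ∞)`. -/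
noncomputable def PiStrip : Set (ℝ × ℝ) := (Set.Ioo (-(π/2)) (π/2)) ×ˢ (Set.Ioi (0 : ℝ))

noncomputable def zC (ξ₁ t : ℝ) : ℂ := (ξ₁ : ℂ) + (t : ℂ) * Complex.I
noncomputable def FC (a ξ₁ t : ℝ) : ℂ := Complex.sin (zC ξ₁ t) ^ 2 - Complex.sin (a : ℂ) ^ 2
noncomputable def SC (a ξ₁ t : ℝ) : ℂ := (FC a ξ₁ t) ^ ((1:ℂ)/2)
noncomputable def wC (a ξ₁ t : ℝ) : ℂ := Complex.sin (zC ξ₁ t) + SC a ξ₁ t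

lemma sin_zC (ξ₁ t : ℝ) : Complex.sin (zC ξ₁ t) =
    ((Real.sin ξ₁ * Real.cosh t : ℝ) : ℂ) + ((Real.cos ξ₁ * Real.sinh t : ℝ) : ℂ) * Complex.I := by
  rw [Complex.sin_eq]
  simp [zC]

lemma zC_zero (ξ₁ : ℝ) : zC ξ₁ 0 = (ξ₁ : ℂ) := by simp [zC]

lemma FC_zero (a ξ₁ : ℝ) : FC a ξ₁ 0 = ((Real.sin ξ₁ ^ 2 - Real.sin a ^ 2 : ℝ) : ℂ) := by
  simp [FC, zC_zero, ← Complex.ofReal_sin]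

lemma SC_sq (a ξ₁ t : ℝ) : SC a ξ₁ t ^ 2 = FC a ξ₁ t := by
  rw [SC, one_div]
  exact_mod_cast Complex.cpow_ofNat_inv_pow _ 2

lemma Xfun_eq (a ξ₁ t : ℝ) :
    Xfun a (ξ₁, t) = Real.log (Complex.normSq (wC a ξ₁ t)) / 2 - t := by
  have : Xfun a (ξ₁, t) = (Complex.log (wC a ξ₁ t)).re - t := rfl
  rw [this, Complex.log_re, Complex.norm_def, Real.log_sqrt (Complex.normSq_nonneg _)]

lemma FC_ne_zero {a : ℝ} (ha0 : 0 < a) (ha1 : a < π/2) (ξ₁ : ℝ) {t : ℝ} (ht : 0 < t) :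
    FC a ξ₁ t ≠ 0 := by
  have hsa0 : 0 < Real.sin a := Real.sin_pos_of_pos_of_lt_pi ha0 (by linarith [Real.pi_pos])
  have hsa1 : Real.sin a < 1 := by
    have := Real.strictMonoOn_sin (a := a) (b := π/2)
      ⟨by linarith [Real.pi_pos], ha1.le⟩ ⟨by linarith [Real.pi_pos], le_refl _⟩ ha1
    simpa using this
  intro h
  have h2 : Complex.sin (zC ξ₁ t) ^ 2 = Complex.sin (a : ℂ) ^ 2 := by
    rw [FC] at h; linear_combination h
  rw [sin_zC, ← Complex.ofReal_sin] at h2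
  set x := Real.sin ξ₁ * Real.cosh t with hx
  set y := Real.cos ξ₁ * Real.sinh t with hy
  have hre : x ^ 2 - y ^ 2 = Real.sin a ^ 2 := by
    have := congrArg Complex.re h2
    simpa [Complex.mul_re, pow_two, Complex.mul_im, Complex.sin_ofReal_re] using this
  have him : x * y = 0 := by
    have := congrArg Complex.im h2
    simp [Complex.mul_im, pow_two] at this
    linarith
  have hsinh : 0 < Real.sinh t := Real.sinh_pos_iff.2 ht
  have hcosh : 1 ≤ Real.cosh t := Real.one_le_cosh t
  rcases mul_eq_zero.1 him with hx0 | hy0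
  · -- x = 0 : sin ξ₁ = 0
    rw [hx0] at hre
    nlinarith
  · -- y = 0 : cos ξ₁ = 0, sin²ξ₁ = 1
    have hcos : Real.cos ξ₁ = 0 := by
      rcases mul_eq_zero.1 hy0 with h | h
      · exact h
      · exact absurd h (ne_of_gt hsinh)
    have hsin2 : Real.sin ξ₁ ^ 2 = 1 := by
      have := Real.sin_sq_add_cos_sq ξ₁
      rw [hcos] at this; nlinarith
    have hx2 : x ^ 2 = Real.cosh t ^ 2 := by rw [hx, mul_pow, hsin2, one_mul]
    nlinarith

lemma abs_sin_per (ξ₁ : ℝ) (j : ℤ) : |Real.sin (ξ₁ - π * j)| = |Real.sin ξ₁| := by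
  rw [show ξ₁ - π * j = ξ₁ - j * π by ring, Real.sin_sub_int_mul_pi, abs_mul]
  have h1 : |(-1 : ℝ) ^ j| = 1 := by
    rcases Int.even_or_odd j with h | h
    · rw [h.neg_one_zpow]; norm_num
    · rw [h.neg_one_zpow]; norm_num
  rw [h1, one_mul]

lemma sin_abs_eq {u : ℝ} (h : |u| ≤ π / 2) : |Real.sin u| = Real.sin |u| := by
  have hpi := Real.pi_pos
  rcases le_or_gt 0 u with hu | hu
  · rw [abs_of_nonneg hu, abs_of_nonneg]
    exact Real.sin_nonneg_of_nonneg_of_le_pi hu (by rw [abs_of_nonneg hu] at h; linarith)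
  · rw [abs_of_neg hu, Real.sin_neg, abs_of_nonpos]
    exact Real.sin_nonpos_of_nonpos_of_neg_pi_le hu.le
      (by rw [abs_of_neg hu] at h; linarith)

lemma abs_sin_lt_sin {a ξ₁ : ℝ} (ha0 : 0 < a) (ha1 : a < π / 2) {j : ℤ}
    (h : |ξ₁ - π * j| < a) : |Real.sin ξ₁| < Real.sin a := by
  have hpi := Real.pi_pos
  have h2 : |ξ₁ - π * j| ≤ π / 2 := by linarith
  rw [← abs_sin_per ξ₁ j, sin_abs_eq h2]
  exact Real.strictMonoOn_sin ⟨by linarith [abs_nonneg (ξ₁ - π * j)], by linarith⟩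
    ⟨by linarith, ha1.le⟩ h

lemma sin_lt_abs_sin {a ξ₁ : ℝ} (ha0 : 0 < a) (ha1 : a < π / 2)
    (h : ∀ j : ℤ, a < |ξ₁ - π * j|) : Real.sin a < |Real.sin ξ₁| := by
  have hpi := Real.pi_pos
  set j := round (ξ₁ / π) with hj
  have h2 : |ξ₁ - π * j| ≤ π / 2 := by
    have := abs_sub_round (ξ₁ / π)
    have h3 : ξ₁ - π * j = π * (ξ₁ / π - j) := by field_simp
    rw [h3, abs_mul, abs_of_pos hpi]
    nlinarith
  rw [← abs_sin_per ξ₁ j, sin_abs_eq h2]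
  exact Real.strictMonoOn_sin ⟨by linarith, ha1.le⟩
    ⟨by linarith [abs_nonneg (ξ₁ - π * j)], by linarith⟩ (h j)

lemma re_sq_eq (u : ℂ) : u.re ^ 2 = (Complex.normSq u + (u ^ 2).re) / 2 := by
  simp only [pow_two, Complex.mul_re, Complex.normSq_apply]; ring

lemma normSq_tendsto {a : ℝ} (ha0 : 0 < a) (ha1 : a < π / 2) {ξ₁ : ℝ}
    (hs : Real.sin ξ₁ ^ 2 < Real.sin a ^ 2) :
    Filter.Tendsto (fun t => Complex.normSq (wC a ξ₁ t)) (nhdsWithin 0 (Set.Ioi 0))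
      (nhds (Real.sin a ^ 2)) := by
  have hzc : Continuous (zC ξ₁) := by
    unfold zC; exact continuous_const.add (Complex.continuous_ofReal.mul continuous_const)
  have hsc : Continuous (fun t => Complex.sin (zC ξ₁ t)) := Complex.continuous_sin.comp hzc
  have hFc : Continuous (FC a ξ₁) := by
    unfold FC; exact (hsc.pow 2).sub continuous_const
  set A : ℝ → ℝ := fun t => Complex.normSq (Complex.sin (zC ξ₁ t)) with hA
  set B : ℝ → ℝ := fun t => ‖FC a ξ₁ t‖ with hB
  set q : ℝ → ℝ := fun t =>
    (A t * B t + ((Complex.sin (zC ξ₁ t)) ^ 2 * (starRingEnd ℂ) (FC a ξ₁ t)).re) / 2 with hq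
  have hAcont : Continuous A := Complex.continuous_normSq.comp hsc
  have hBcont : Continuous B := continuous_norm.comp hFc
  have hqcont : Continuous q := by
    apply Continuous.div_const
    exact (hAcont.mul hBcont).add
      (Complex.continuous_re.comp ((hsc.pow 2).mul (continuous_star.comp hFc)))
  have hsin0 : Complex.sin (zC ξ₁ 0) = ((Real.sin ξ₁ : ℝ) : ℂ) := by
    rw [zC_zero, Complex.ofReal_sin]
  have hA0 : A 0 = Real.sin ξ₁ ^ 2 := by
    rw [hA]; simp only [hsin0, Complex.normSq_ofReal]; ring
  have hB0 : B 0 = Real.sin a ^ 2 - Real.sin ξ₁ ^ 2 := by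
    rw [hB]; simp only [FC_zero, Complex.norm_real, Real.norm_eq_abs]; rw [abs_of_neg (by linarith)]; ring
  have hq0 : q 0 = 0 := by
    have h1 : ((Complex.sin (zC ξ₁ 0)) ^ 2 * (starRingEnd ℂ) (FC a ξ₁ 0)).re
        = Real.sin ξ₁ ^ 2 * (Real.sin ξ₁ ^ 2 - Real.sin a ^ 2) := by
      rw [hsin0, FC_zero, Complex.conj_ofReal, ← Complex.ofReal_pow, ← Complex.ofReal_mul,
        Complex.ofReal_re]
    rw [hq]; simp only [h1, hA0, hB0]; ring
  have hbound : ∀ t ∈ Set.Ioi (0:ℝ),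
      |Complex.normSq (wC a ξ₁ t) - (A t + B t)| ≤ 2 * Real.sqrt (q t) := by
    intro t ht
    have hFne : FC a ξ₁ t ≠ 0 := FC_ne_zero ha0 ha1 ξ₁ ht
    have hSsq := SC_sq a ξ₁ t
    have hnS : Complex.normSq (SC a ξ₁ t) = B t := by
      rw [hB, Complex.normSq_eq_norm_sq]
      have h12 : ((1:ℂ)/2) = ((1/2 : ℝ) : ℂ) := by norm_num
      rw [SC, h12, Complex.norm_cpow_real,
        ← Real.rpow_natCast (‖FC a ξ₁ t‖ ^ ((1:ℝ)/2)) 2,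
        ← Real.rpow_mul (norm_nonneg _)]
      norm_num
    set r : ℝ := (Complex.sin (zC ξ₁ t) * (starRingEnd ℂ) (SC a ξ₁ t)).re with hr
    have hu2 : (Complex.sin (zC ξ₁ t) * (starRingEnd ℂ) (SC a ξ₁ t)) ^ 2
        = (Complex.sin (zC ξ₁ t)) ^ 2 * (starRingEnd ℂ) (FC a ξ₁ t) := by
      rw [mul_pow, ← map_pow, hSsq]
    have hnu : Complex.normSq (Complex.sin (zC ξ₁ t) * (starRingEnd ℂ) (SC a ξ₁ t))
        = A t * B t := by
      rw [Complex.normSq_mul, Complex.normSq_conj, hnS, hA]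
    have hr2 : r ^ 2 = q t := by
      rw [hr, re_sq_eq, hnu, hu2, hq]
    have habs : |r| = Real.sqrt (q t) := by rw [← hr2, Real.sqrt_sq_eq_abs]
    have hw : Complex.normSq (wC a ξ₁ t)
        = A t + Complex.normSq (SC a ξ₁ t) + 2 * r := by
      rw [wC]; exact Complex.normSq_add _ _
    rw [hw, hnS, ← habs]
    rw [show A t + B t + 2 * r - (A t + B t) = 2 * r by ring, abs_mul]
    norm_num
  have htend2 : Filter.Tendsto (fun t => 2 * Real.sqrt (q t)) (nhdsWithin 0 (Set.Ioi 0))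
      (nhds 0) := by
    have h1 : Filter.Tendsto (fun t => Real.sqrt (q t)) (nhds 0) (nhds (Real.sqrt (q 0))) :=
      (Real.continuous_sqrt.comp hqcont).tendsto 0
    rw [hq0, Real.sqrt_zero] at h1
    have := (h1.const_mul 2).mono_left
      (nhdsWithin_le_nhds : nhdsWithin (0:ℝ) (Set.Ioi 0) ≤ nhds 0)
    simpa using this
  have key1 : Filter.Tendsto (fun t => Complex.normSq (wC a ξ₁ t) - (A t + B t))
      (nhdsWithin 0 (Set.Ioi 0)) (nhds 0) := by
    apply squeeze_zero_norm' _ htend2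
    filter_upwards [eventually_mem_nhdsWithin] with t ht
    simpa [Real.norm_eq_abs] using hbound t ht
  have key2 : Filter.Tendsto (fun t => A t + B t) (nhdsWithin 0 (Set.Ioi 0))
      (nhds (Real.sin a ^ 2)) := by
    have := ((hAcont.add hBcont).tendsto 0).mono_left
      (nhdsWithin_le_nhds (s := Set.Ioi (0:ℝ)))
    rw [Pi.add_apply, hA0, hB0, show Real.sin ξ₁ ^ 2 + (Real.sin a ^ 2 - Real.sin ξ₁ ^ 2)
      = Real.sin a ^ 2 by ring] at this
    exact this
  have := key1.add key2
  simpa using this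

lemma part2 {a : ℝ} (ha0 : 0 < a) (ha1 : a < π / 2) {ξ₁ : ℝ}
    (hs : Real.sin a ^ 2 < Real.sin ξ₁ ^ 2) :
    Filter.Tendsto (fun t => deriv (fun s => Xfun a (ξ₁, s)) t)
      (nhdsWithin 0 (Set.Ioi 0)) (nhds (-1)) := by
  have hsa0 : 0 < Real.sin a := Real.sin_pos_of_pos_of_lt_pi ha0 (by linarith [Real.pi_pos])
  have hP0 : 0 < Real.sin ξ₁ ^ 2 - Real.sin a ^ 2 := by linarith
  have hzc : Continuous (zC ξ₁) := by
    unfold zC; exact continuous_const.add (Complex.continuous_ofReal.mul continuous_const)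
  have hsc : Continuous (fun t => Complex.sin (zC ξ₁ t)) := Complex.continuous_sin.comp hzc
  have hFc : Continuous (FC a ξ₁) := by
    unfold FC; exact (hsc.pow 2).sub continuous_const
  have hsin0 : Complex.sin (zC ξ₁ 0) = ((Real.sin ξ₁ : ℝ) : ℂ) := by
    rw [zC_zero, Complex.ofReal_sin]
  have hslit0 : FC a ξ₁ 0 ∈ Complex.slitPlane := by
    refine Complex.mem_slitPlane_iff.2 (Or.inl ?_)
    rw [FC_zero, Complex.ofReal_re]
    linarith
  have hS0 : SC a ξ₁ 0 = ((Real.sqrt (Real.sin ξ₁ ^ 2 - Real.sin a ^ 2) : ℝ) : ℂ) := by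
    have h12 : ((1:ℂ)/2) = (((1:ℝ)/2 : ℝ) : ℂ) := by norm_num
    rw [SC, FC_zero, h12, ← Complex.ofReal_cpow hP0.le, Real.sqrt_eq_rpow]
  have hS0ne : SC a ξ₁ 0 ≠ 0 := by
    rw [hS0]
    simpa using (Real.sqrt_ne_zero'.2 hP0).symm ∘ Eq.symm
  have hScont0 : ContinuousAt (fun t => SC a ξ₁ t) 0 := by
    have := (continuousAt_cpow_const (b := (1:ℂ)/2) hslit0).comp hFc.continuousAt
    simpa [SC, Function.comp_def] using this
  have hwcont0 : ContinuousAt (fun t => wC a ξ₁ t) 0 := by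
    simp only [wC]; exact hsc.continuousAt.add hScont0
  have hw0ne : wC a ξ₁ 0 ≠ 0 := by
    rw [wC, hsin0, hS0]
    intro h
    have h0 : Real.sin ξ₁ + Real.sqrt (Real.sin ξ₁ ^ 2 - Real.sin a ^ 2) = 0 := by
      exact_mod_cast h
    have hsq : Real.sqrt (Real.sin ξ₁ ^ 2 - Real.sin a ^ 2) ^ 2
        = Real.sin ξ₁ ^ 2 - Real.sin a ^ 2 := Real.sq_sqrt hP0.le
    have h2 : Real.sqrt (Real.sin ξ₁ ^ 2 - Real.sin a ^ 2) = - Real.sin ξ₁ := by linarith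
    rw [h2] at hsq
    nlinarith
  have hevent : ∀ᶠ t in nhdsWithin (0:ℝ) (Set.Ioi 0),
      FC a ξ₁ t ∈ Complex.slitPlane ∧ wC a ξ₁ t ≠ 0 := by
    apply Filter.Eventually.filter_mono
      (nhdsWithin_le_nhds : nhdsWithin (0:ℝ) (Set.Ioi 0) ≤ nhds 0)
    exact (hFc.continuousAt.eventually_mem
      (Complex.isOpen_slitPlane.mem_nhds hslit0)).and (hwcont0.eventually_ne hw0ne)
  set G : ℝ → ℝ := fun t => (Complex.I * Complex.cos (zC ξ₁ t) / SC a ξ₁ t).re - 1 with hG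
  have heq : ∀ᶠ t in nhdsWithin (0:ℝ) (Set.Ioi 0),
      deriv (fun s => Xfun a (ξ₁, s)) t = G t := by
    filter_upwards [hevent] with t ht
    obtain ⟨hslit, hwne⟩ := ht
    have hSne : SC a ξ₁ t ≠ 0 := by
      rw [SC]
      intro h
      exact Complex.slitPlane_ne_zero hslit ((Complex.cpow_eq_zero_iff _ _).1 h).1
    -- derivative chain
    have h1 : HasDerivAt (fun s : ℝ => ((s : ℝ) : ℂ)) 1 t := by
      simpa using (hasDerivAt_id t).ofReal_comp
    have hzd : HasDerivAt (fun s : ℝ => zC ξ₁ s) Complex.I t := by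
      unfold zC
      simpa using (h1.mul_const Complex.I).const_add (ξ₁ : ℂ)
    have hsind : HasDerivAt (fun s => Complex.sin (zC ξ₁ s))
        (Complex.cos (zC ξ₁ t) * Complex.I) t := by
      have := (Complex.hasDerivAt_sin (zC ξ₁ t)).scomp t hzd
      simpa [smul_eq_mul, mul_comm, Function.comp_def] using this
    set F' : ℂ := Complex.cos (zC ξ₁ t) * Complex.I * Complex.sin (zC ξ₁ t)
      + Complex.sin (zC ξ₁ t) * (Complex.cos (zC ξ₁ t) * Complex.I) with hF'
    have hFd : HasDerivAt (fun s => FC a ξ₁ s) F' t := by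
      have := (hsind.mul hsind).sub_const (Complex.sin (a:ℂ) ^ 2)
      simpa [FC, pow_two, hF'] using this
    have hSd : HasDerivAt (fun s => SC a ξ₁ s)
        (F' * ((1/2 : ℂ) * FC a ξ₁ t ^ ((1:ℂ)/2 - 1))) t := by
      have := ((Complex.hasStrictDerivAt_cpow_const (c := (1:ℂ)/2)
        hslit).hasDerivAt).scomp t hFd
      simpa [SC, smul_eq_mul, Function.comp_def] using this
    set W : ℂ := Complex.cos (zC ξ₁ t) * Complex.I
      + F' * ((1/2 : ℂ) * FC a ξ₁ t ^ ((1:ℂ)/2 - 1)) with hW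
    have hwd : HasDerivAt (fun s => wC a ξ₁ s) W t := by
      have := hsind.add hSd
      simpa [wC, hW, Pi.add_def] using this
    have hre : HasDerivAt (fun s => (wC a ξ₁ s).re) W.re t := by
      simpa [Function.comp_def] using Complex.reCLM.hasFDerivAt.comp_hasDerivAt t hwd
    have him : HasDerivAt (fun s => (wC a ξ₁ s).im) W.im t := by
      simpa [Function.comp_def] using Complex.imCLM.hasFDerivAt.comp_hasDerivAt t hwd
    set D : ℝ := W.re * (wC a ξ₁ t).re + (wC a ξ₁ t).re * W.re
      + (W.im * (wC a ξ₁ t).im + (wC a ξ₁ t).im * W.im) with hD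
    have hnd : HasDerivAt (fun s => Complex.normSq (wC a ξ₁ s)) D t := by
      have := (hre.mul hre).add (him.mul him)
      simpa [Complex.normSq_apply, hD, Pi.add_def, Pi.mul_def] using this
    have hne : Complex.normSq (wC a ξ₁ t) ≠ 0 := by
      simpa [Complex.normSq_eq_zero] using hwne
    have hld : HasDerivAt (fun s => Real.log (Complex.normSq (wC a ξ₁ s)))
        ((Complex.normSq (wC a ξ₁ t))⁻¹ * D) t := by
          have := (Real.hasDerivAt_log hne).comp t hnd; exact this
    have hXd : HasDerivAt (fun s => Xfun a (ξ₁, s))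
        ((Complex.normSq (wC a ξ₁ t))⁻¹ * D / 2 - 1) t := by
      have hfun : (fun s => Xfun a (ξ₁, s))
          = fun s => Real.log (Complex.normSq (wC a ξ₁ s)) / 2 - s :=
        funext (Xfun_eq a ξ₁)
      rw [hfun]
      exact (hld.div_const 2).sub (hasDerivAt_id t)
    rw [hXd.deriv, hG]
    have hDre : (Complex.normSq (wC a ξ₁ t))⁻¹ * D / 2 = (W / wC a ξ₁ t).re := by
      rw [Complex.div_re, hD]
      field_simp
      ring
    have hFpow : FC a ξ₁ t ^ ((1:ℂ)/2 - 1) = (SC a ξ₁ t)⁻¹ := by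
      rw [show ((1:ℂ)/2 - 1) = -((1:ℂ)/2) by norm_num, Complex.cpow_neg, SC]
    have hwexp : wC a ξ₁ t = Complex.sin (zC ξ₁ t) + SC a ξ₁ t := rfl
    have hWw : W / wC a ξ₁ t = Complex.I * Complex.cos (zC ξ₁ t) / SC a ξ₁ t := by
      rw [hW, hF', hFpow, hwexp]
      rw [hwexp] at hwne
      field_simp
      ring
    rw [hDre, hWw]
  have htendG : Filter.Tendsto G (nhdsWithin 0 (Set.Ioi 0)) (nhds (-1)) := by
    have hGc : Filter.Tendsto G (nhds 0) (nhds (G 0)) := by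
      apply ContinuousAt.tendsto
      apply ContinuousAt.sub _ continuousAt_const
      exact Complex.continuous_re.continuousAt.comp
        ((continuousAt_const.mul (Complex.continuous_cos.comp hzc).continuousAt).div
          hScont0 hS0ne)
    have hG0 : G 0 = -1 := by
      rw [hG]
      simp only [zC_zero, hS0, ← Complex.ofReal_cos]
      simp [Complex.div_re]
    rw [hG0] at hGc
    exact hGc.mono_left nhdsWithin_le_nhds
  exact htendG.congr' (heq.mono fun t ht => ht.symm)


/-- Boundary values of `X(·,a)`: Dirichlet value `ln sin a` on `γ(a)` and
Neumann value `−1` on `Γ(a)`, understood as limits `ξ₂ → 0⁺`. -/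
theorem Xfun_boundary_values (a : ℝ) (ha : a ∈ Set.Ioo 0 (π/2)) :
    (∀ ξ₁ : ℝ, (∃ j : ℤ, |ξ₁ - π * j| < a) →
      Filter.Tendsto (fun ξ₂ => Xfun a (ξ₁, ξ₂)) (nhdsWithin 0 (Set.Ioi 0))
        (nhds (Real.log (Real.sin a)))) ∧
    (∀ ξ₁ : ℝ, (∀ j : ℤ, a < |ξ₁ - π * j|) →
      Filter.Tendsto (fun ξ₂ => pd2 (Xfun a) (ξ₁, ξ₂)) (nhdsWithin 0 (Set.Ioi 0))
        (nhds (-1))) := by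
  obtain ⟨ha0, ha1⟩ := ha
  have hsa0 : 0 < Real.sin a := Real.sin_pos_of_pos_of_lt_pi ha0 (by linarith [Real.pi_pos])
  constructor
  · intro ξ₁ ⟨j, hj⟩
    have habs : |Real.sin ξ₁| < Real.sin a := abs_sin_lt_sin ha0 ha1 hj
    have hs2 : Real.sin ξ₁ ^ 2 < Real.sin a ^ 2 := by
      nlinarith [sq_abs (Real.sin ξ₁), abs_nonneg (Real.sin ξ₁)]
    have h1 := normSq_tendsto ha0 ha1 hs2
    have hL : Filter.Tendsto (fun t => Real.log (Complex.normSq (wC a ξ₁ t)) / 2)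
        (nhdsWithin 0 (Set.Ioi 0)) (nhds (Real.log (Real.sin a))) := by
      have hc : ContinuousAt Real.log (Real.sin a ^ 2) :=
        Real.continuousAt_log (by positivity)
      have := (hc.tendsto.comp h1).div_const 2
      rw [Real.log_pow] at this
      norm_num at this
      exact this
    have hid : Filter.Tendsto (fun t : ℝ => t) (nhdsWithin 0 (Set.Ioi 0)) (nhds 0) :=
      (continuous_id.tendsto 0).mono_left nhdsWithin_le_nhds
    have := hL.sub hid
    norm_num at this
    refine this.congr fun t => ?_
    rw [Xfun_eq]
  · intro ξ₁ hj
    have habs : Real.sin a < |Real.sin ξ₁| := sin_lt_abs_sin ha0 ha1 hj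
    have hs2 : Real.sin a ^ 2 < Real.sin ξ₁ ^ 2 := by
      nlinarith [sq_abs (Real.sin ξ₁), abs_nonneg (Real.sin ξ₁)]
    have := part2 ha0 ha1 hs2
    refine this.congr fun t => ?_
    rfl
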